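/- In an anti-Fock representation with normalized anti-Fock vector Ψ₋₁ satisfying a⁺Ψ₋₁ = 0 and (Ψ₋₁, Ψ₋₁) = 1, the vectors Ψ₋ₙ := aⁿ⁻¹Ψ₋₁/√((n−1)!) satisfy (Ψ₋ₙ, Ψ₋ₙ) = (−1)^{n−1} for all n ∈ ℕ, n ≥ 1. -/

import Mathlib

/-- In an anti-Fock representation with `a⁺Ψ₋₁ = 0` and `(Ψ₋₁,Ψ₋₁) = 1`, the
normalized vectors `Ψ₋ₙ = aⁿ⁻¹Ψ₋₁/√((n−1)!)` satisfy `(Ψ₋ₙ,Ψ₋ₙ) = (−1)^{n−1}`. -/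
theorem antiFock_norms_alternate
    {V : Type*} [AddCommGroup V] [Module ℂ V]
    (B : V →ₗ⋆[ℂ] V →ₗ[ℂ] ℂ)
    (a ad : Module.End ℂ V)
    (hccr : a * ad - ad * a = 1)
    (hadj : ∀ x y, B (a x) y = B x (ad y))
    (hadj' : ∀ x y, B (ad x) y = B x (a y))
    (Ψ : V) (hΨ : ad Ψ = 0) (hnorm : B Ψ Ψ = 1) :
    ∀ n : ℕ, 1 ≤ n →
      B (((Real.sqrt (Nat.factorial (n - 1)) : ℂ))⁻¹ • (a ^ (n - 1)) Ψ)
        (((Real.sqrt (Nat.factorial (n - 1)) : ℂ))⁻¹ • (a ^ (n - 1)) Ψ)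
        = (-1 : ℂ) ^ (n - 1) := by
  have h1 : ∀ m : ℕ, (a ^ (m+1)) Ψ = a ((a ^ m) Ψ) := by
    intro m; rw [pow_succ', Module.End.mul_apply]
  have hcomm : ∀ v : V, ad (a v) = a (ad v) - v := by
    intro v
    have := congrArg (fun f : Module.End ℂ V => f v) hccr
    simp [Module.End.mul_apply] at this
    linear_combination (norm := module) -this
  have key : ∀ k : ℕ, ad ((a ^ (k+1)) Ψ) = -((k:ℂ)+1) • (a ^ k) Ψ := by
    intro k
    induction k with
    | zero => simp [h1, hΨ, hcomm]
    | succ k ih =>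
      rw [h1 (k+1), hcomm, ih, map_smul, ← h1 k]
      push_cast
      module
  have main : ∀ k : ℕ, B ((a ^ k) Ψ) ((a ^ k) Ψ) = (-1 : ℂ) ^ k * (Nat.factorial k) := by
    intro k
    induction k with
    | zero => simp [hnorm]
    | succ k ih =>
      calc B ((a ^ (k+1)) Ψ) ((a ^ (k+1)) Ψ)
          = B ((a ^ k) Ψ) (ad ((a ^ (k+1)) Ψ)) := by rw [h1, hadj]
        _ = B ((a ^ k) Ψ) (-((k:ℂ)+1) • (a ^ k) Ψ) := by rw [key]
        _ = -((k:ℂ)+1) * ((-1 : ℂ) ^ k * (Nat.factorial k)) := by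
            rw [map_smul, ih]; simp
        _ = (-1 : ℂ) ^ (k+1) * (Nat.factorial (k+1)) := by
            rw [Nat.factorial_succ]; push_cast; ring
  intro n hn
  obtain ⟨k, rfl⟩ := Nat.exists_eq_add_of_le hn
  have hk : 1 + k - 1 = k := by omega
  rw [hk]
  have hfac : (0:ℝ) < (Nat.factorial k : ℝ) := by exact_mod_cast Nat.factorial_pos k
  have hsq : (Real.sqrt (Nat.factorial k) : ℂ) * (Real.sqrt (Nat.factorial k) : ℂ)
      = (Nat.factorial k : ℂ) := by
    rw [← Complex.ofReal_mul, Real.mul_self_sqrt hfac.le]; push_cast; ring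
  have hne : (Real.sqrt (Nat.factorial k) : ℂ) ≠ 0 :=
    Complex.ofReal_ne_zero.mpr (Real.sqrt_pos.mpr hfac).ne'
  rw [B.map_smulₛₗ, LinearMap.smul_apply, (B _).map_smul, smul_eq_mul, smul_eq_mul, main]
  rw [map_inv₀, Complex.conj_ofReal]
  field_simp
  rw [sq, hsq]
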